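/- In the setting of the sparse accelerated SVRG step: let f = (1/n)∑ f_i with f_i convex L-smooth and ∇f_i supported on T_i; let D, D_i be the sparse-estimator matrices; let 0 < θ < 1, η = (1-θ)/(Lθ), φ = (1-θ)/L; let z_k, x̃, x★ ∈ ℝ^d and y = θz_k + (1-θ)x̃ - φD∇f(x̃); for each i let z_{k+1}^{(i)} = z_k - η(∇f_i(y) - ∇f_i(x̃) + D_i∇f(x̃)). Then f(y) - f(x★) ≤ (1-θ)(f(x̃) - f(x★)) + (Lθ²/(2(1-θ)))(‖z_k - x★‖² - (1/n)∑_{i=1}^n ‖z_{k+1}^{(i)} - x★‖²). -/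

import Mathlib

open scoped RealInnerProductSpace BigOperators

open scoped RealInnerProductSpace
open Set Filter Topology

variable {E : Type*} [NormedAddCommGroup E] [InnerProductSpace ℝ E] [CompleteSpace E]

lemma line_hasDerivAt {f : E → ℝ} {g : E} {y : E} (hg : HasGradientAt f g y) (v : E) :
    HasDerivAt (fun t : ℝ => f (y + t • v)) ⟪g, v⟫ 0 := by
  have hc : HasDerivAt (fun t : ℝ => y + t • v) v 0 := by
    simpa using ((hasDerivAt_id (0:ℝ)).smul_const v).const_add y
  have hf : HasFDerivAt f (InnerProductSpace.toDual ℝ E g) (y + (0:ℝ) • v) := by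
    simpa using hg.hasFDerivAt
  have h := hf.comp_hasDerivAt 0 hc
  simp only [InnerProductSpace.toDual_apply_apply] at h
  exact h

lemma convex_grad_ineq {f : E → ℝ} {g : E} {y : E} (hf : ConvexOn ℝ Set.univ f)
    (hg : HasGradientAt f g y) (x : E) : f y + ⟪g, x - y⟫ ≤ f x := by
  have hline := line_hasDerivAt hg (x - y)
  rw [hasDerivAt_iff_tendsto_slope] at hline
  have hmono : 𝓝[>] (0:ℝ) ≤ 𝓝[≠] (0:ℝ) :=
    nhdsWithin_mono 0 (fun t ht => ne_of_gt ht)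
  have hle : ⟪g, x - y⟫ ≤ f x - f y := by
    refine le_of_tendsto (hline.mono_left hmono) ?_
    filter_upwards [Ioc_mem_nhdsGT_of_mem (by simp : (0:ℝ) ∈ Ico (0:ℝ) 1)] with t ht
    have ht0 : 0 < t := ht.1
    have hcomb : f (y + t • (x - y)) ≤ (1 - t) * f y + t * f x := by
      have := hf.2 (mem_univ y) (mem_univ x) (by linarith [ht.2] : (0:ℝ) ≤ 1 - t)
        ht0.le (by ring)
      have heq : (1 - t) • y + t • x = y + t • (x - y) := by module
      rw [heq] at this
      simpa using this
    have : slope (fun t : ℝ => f (y + t • (x - y))) 0 t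
        = (f (y + t • (x - y)) - f y) / t := by
      simp [slope_def_field]
    rw [this, div_le_iff₀ ht0]
    calc f (y + t • (x - y)) - f y ≤ (1 - t) * f y + t * f x - f y := by linarith
      _ = (f x - f y) * t := by ring
  linarith

lemma line_hasDerivAt' {f : E → ℝ} {g : E → E} (hg : ∀ x, HasGradientAt f (g x) x)
    (y v : E) (t : ℝ) :
    HasDerivAt (fun t : ℝ => f (y + t • v)) ⟪g (y + t • v), v⟫ t := by
  have hc : HasDerivAt (fun t : ℝ => y + t • v) v t := by
    simpa using ((hasDerivAt_id t).smul_const v).const_add y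
  have hf : HasFDerivAt f (InnerProductSpace.toDual ℝ E (g (y + t • v))) (y + t • v) :=
    hg (y + t • v)
  have h := hf.comp_hasDerivAt t hc
  simp only [InnerProductSpace.toDual_apply_apply] at h
  exact h

lemma descent_lemma {f : E → ℝ} {g : E → E} (hg : ∀ x, HasGradientAt f (g x) x)
    {L : ℝ} (hL : 0 < L) (hlip : LipschitzWith L.toNNReal g) (x y : E) :
    f x ≤ f y + ⟪g y, x - y⟫ + L / 2 * ‖x - y‖ ^ 2 := by
  set v := x - y with hv
  set χ : ℝ → ℝ := fun t => f (y + t • v) - t * ⟪g y, v⟫ - L / 2 * ‖v‖ ^ 2 * t ^ 2 with hχ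
  have hder : ∀ t : ℝ, HasDerivAt χ
      (⟪g (y + t • v), v⟫ - ⟪g y, v⟫ - L / 2 * ‖v‖ ^ 2 * (2 * t)) t := by
    intro t
    have h := ((line_hasDerivAt' hg y v t).sub (hasDerivAt_mul_const (⟪g y, v⟫ : ℝ))).sub
      ((hasDerivAt_pow 2 t).const_mul (L / 2 * ‖v‖ ^ 2))
    norm_num at h
    convert h using 1 <;> rfl
  have hlipnorm : ∀ a b : E, ‖g a - g b‖ ≤ L * ‖a - b‖ := by
    intro a b
    have := hlip.dist_le_mul a b
    rwa [dist_eq_norm, dist_eq_norm, Real.coe_toNNReal _ hL.le] at this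
  have hcont : Continuous χ := by
    have : Differentiable ℝ χ := fun t => (hder t).differentiableAt
    exact this.continuous
  have hanti : AntitoneOn χ (Set.Icc (0:ℝ) 1) := by
    apply antitoneOn_of_deriv_nonpos (convex_Icc 0 1) hcont.continuousOn
    · intro t _
      exact ((hder t).differentiableAt).differentiableWithinAt
    · intro t ht
      rw [interior_Icc] at ht
      have ht0 : 0 < t := ht.1
      rw [(hder t).deriv]
      have h1 : ⟪g (y + t • v), v⟫ - ⟪g y, v⟫ ≤ L * t * ‖v‖ ^ 2 := by
        have h2 : ⟪g (y + t • v) - g y, v⟫ ≤ ‖g (y + t • v) - g y‖ * ‖v‖ :=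
          real_inner_le_norm _ _
        have h3 : ‖g (y + t • v) - g y‖ ≤ L * (t * ‖v‖) := by
          have := hlipnorm (y + t • v) y
          simpa [norm_smul, abs_of_pos ht0, mul_assoc] using this
        have h4 : ⟪g (y + t • v) - g y, v⟫ = ⟪g (y + t • v), v⟫ - ⟪g y, v⟫ := by
          rw [inner_sub_left]
        nlinarith [norm_nonneg v, norm_nonneg (g (y + t • v) - g y)]
      nlinarith [h1]
  have h01 : χ 1 ≤ χ 0 := hanti (by simp : (0:ℝ) ∈ Set.Icc (0:ℝ) 1)
    (by norm_num : (1:ℝ) ∈ Set.Icc (0:ℝ) 1) zero_le_one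
  have hχ0 : χ 0 = f y := by simp [hχ]
  have hx : y + (1:ℝ) • v = x := by rw [hv]; module
  have hχ1 : χ 1 = f x - ⟪g y, v⟫ - L / 2 * ‖v‖ ^ 2 := by
    show f (y + (1:ℝ) • v) - 1 * ⟪g y, v⟫ - L / 2 * ‖v‖ ^ 2 * 1 ^ 2 = _
    rw [hx]; ring
  rw [hχ0, hχ1] at h01
  linarith

lemma cocoercivity {f : E → ℝ} {g : E → E} (hg : ∀ x, HasGradientAt f (g x) x)
    (hf : ConvexOn ℝ Set.univ f) {L : ℝ} (hL : 0 < L)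
    (hlip : LipschitzWith L.toNNReal g) (x y : E) :
    ‖g x - g y‖ ^ 2 ≤ 2 * L * (f x - f y - ⟪g y, x - y⟫) := by
  set z := x - L⁻¹ • (g x - g y) with hz
  set N := ‖g x - g y‖ ^ 2 with hN
  have h1 : f y + ⟪g y, z - y⟫ ≤ f z := convex_grad_ineq hf (hg y) z
  have h2 : f z ≤ f x + ⟪g x, z - x⟫ + L / 2 * ‖z - x‖ ^ 2 := descent_lemma hg hL hlip z x
  have hzx : z - x = -(L⁻¹ • (g x - g y)) := by rw [hz]; abel
  have h3 : ⟪g x, z - x⟫ = -(L⁻¹ * ⟪g x, g x - g y⟫) := by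
    rw [hzx, inner_neg_right, real_inner_smul_right]
  have h4 : ‖z - x‖ ^ 2 = L⁻¹ ^ 2 * N := by
    rw [hzx, norm_neg, norm_smul, mul_pow, Real.norm_eq_abs, sq_abs, hN]
  have h5 : ⟪g y, z - y⟫ = ⟪g y, x - y⟫ - L⁻¹ * ⟪g y, g x - g y⟫ := by
    have h : z - y = (x - y) - L⁻¹ • (g x - g y) := by rw [hz]; abel
    rw [h, inner_sub_right, real_inner_smul_right]
  have h6 : ⟪g x, g x - g y⟫ - ⟪g y, g x - g y⟫ = N := by
    rw [← inner_sub_left, real_inner_self_eq_norm_sq, hN]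
  have h6' : L⁻¹ * ⟪g x, g x - g y⟫ - L⁻¹ * ⟪g y, g x - g y⟫ = L⁻¹ * N := by
    linear_combination L⁻¹ * h6
  have hcomb : L⁻¹ * N - L / 2 * (L⁻¹ ^ 2 * N) ≤ f x - f y - ⟪g y, x - y⟫ := by
    have h4' : L / 2 * ‖z - x‖ ^ 2 = L / 2 * (L⁻¹ ^ 2 * N) := by rw [h4]
    linarith [h1, h2, h3, h5, h6', h4']
  have final := mul_le_mul_of_nonneg_left hcomb (by positivity : (0:ℝ) ≤ 2 * L)
  have key : (2 * L) * (L⁻¹ * N - L / 2 * (L⁻¹ ^ 2 * N)) = N := by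
    field_simp
    ring
  linarith [final, key]


open scoped BigOperators

lemma euclid_sum_apply {n d : ℕ} (f : Fin n → EuclideanSpace ℝ (Fin d)) (v : Fin d) :
    (∑ i, f i) v = ∑ i, f i v := by
  induction (Finset.univ : Finset (Fin n)) using Finset.cons_induction with
  | empty => simp only [Finset.sum_empty]; rfl
  | cons a s ha ih => rw [Finset.sum_cons, Finset.sum_cons, ← ih]; rfl

lemma euclid_inner_apply {d : ℕ} (a b : EuclideanSpace ℝ (Fin d)) :
    ⟪a, b⟫ = ∑ v, a v * b v := by
  simp [PiLp.inner_apply, RCLike.inner_apply, mul_comm]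

lemma scalar_final {θ L s v1 w m u A S P Q R Z : ℝ} (hθ0 : 0 < θ) (hθ1 : θ < 1) (hL : 0 < L)
    (h_s : s ≤ R - P) (h_A : A ≤ 2*L*(Q - P - v1)) (h_m : 0 ≤ m)
    (h_E1 : θ*u = -(θ*s) - (1-θ)*v1 + ((1-θ)/L)*w)
    (h_S : S = A + 2*w - m)
    (h_Z : Z = 2*((1-θ)/(L*θ))*u - ((1-θ)/(L*θ))^2*S) :
    P - R ≤ (1-θ)*(Q - R) + (L*θ^2/(2*(1-θ)))*Z := by
  have hθ1' : 0 < 1 - θ := by linarith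
  have hLne : L ≠ 0 := hL.ne'
  have h1 : (L*θ^2/(2*(1-θ)))*Z = θ*u - ((1-θ)/(2*L))*S := by
    rw [h_Z]; field_simp
  have hcn : 0 ≤ (1-θ)/(2*L) := by positivity
  have h3 : ((1-θ)/(2*L))*A ≤ (1-θ)*(Q-P-v1) := by
    have h3a := mul_le_mul_of_nonneg_left h_A hcn
    have h3b : ((1-θ)/(2*L))*(2*L*(Q-P-v1)) = (1-θ)*(Q-P-v1) := by
      field_simp
    linarith
  have h5 : θ*s ≤ θ*(R-P) := mul_le_mul_of_nonneg_left h_s hθ0.le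
  have h6 : 0 ≤ ((1-θ)/(2*L))*m := mul_nonneg hcn h_m
  have h7 : ((1-θ)/(2*L))*S = ((1-θ)/(2*L))*A + 2*(((1-θ)/(2*L))*w) - ((1-θ)/(2*L))*m := by
    linear_combination ((1-θ)/(2*L))*h_S
  have h8 : ((1-θ)/L)*w = 2*(((1-θ)/(2*L))*w) := by
    field_simp
  rw [h1]
  linarith

set_option maxHeartbeats 2000000 in
theorem one_step_descent_inequality {n d : ℕ} (hn : 0 < n) (L : ℝ) (hL : 0 < L)
    (fi : Fin n → EuclideanSpace ℝ (Fin d) → ℝ)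
    (gi : Fin n → EuclideanSpace ℝ (Fin d) → EuclideanSpace ℝ (Fin d))
    (hgrad : ∀ i x, HasGradientAt (fi i) (gi i x) x)
    (hconv : ∀ i, ConvexOn ℝ Set.univ (fi i))
    (hlip : ∀ i, LipschitzWith L.toNNReal (gi i))
    (p : Fin n → Fin d → ℝ) (hp : ∀ i v, p i v = 0 ∨ p i v = 1)
    (hsupp : ∀ i x v, p i v = 0 → gi i x v = 0)
    (Dv : Fin d → ℝ) (hDv : ∀ v, Dv v * ((1 / n : ℝ) * ∑ i, p i v) = 1)
    (F : EuclideanSpace ℝ (Fin d) → ℝ) (hF : ∀ x, F x = (1 / n : ℝ) * ∑ i, fi i x)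
    (gF : EuclideanSpace ℝ (Fin d) → EuclideanSpace ℝ (Fin d))
    (hgF : ∀ x, gF x = (n : ℝ)⁻¹ • ∑ i, gi i x)
    (θ η φ : ℝ) (hθ0 : 0 < θ) (hθ1 : θ < 1)
    (hη : η = (1 - θ) / (L * θ)) (hφ : φ = (1 - θ) / L)
    (zk xt xstar : EuclideanSpace ℝ (Fin d))
    (Dg : EuclideanSpace ℝ (Fin d)) (hDg : ∀ v, Dg v = Dv v * gF xt v)
    (Di : Fin n → EuclideanSpace ℝ (Fin d))
    (hDi : ∀ i v, Di i v = p i v * (Dv v * gF xt v))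
    (y : EuclideanSpace ℝ (Fin d))
    (hy : y = θ • zk + (1 - θ) • xt - φ • Dg)
    (z' : Fin n → EuclideanSpace ℝ (Fin d))
    (hz' : ∀ i, z' i = zk - η • (gi i y - gi i xt + Di i)) :
    F y - F xstar ≤
      (1 - θ) * (F xt - F xstar)
        + (L * θ ^ 2 / (2 * (1 - θ)))
            * (‖zk - xstar‖ ^ 2 - (1 / n : ℝ) * ∑ i, ‖z' i - xstar‖ ^ 2) := by
  have hn' : (0:ℝ) < n := by exact_mod_cast hn
  have hnne : (n:ℝ) ≠ 0 := hn'.ne'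
  have hLne : L ≠ 0 := hL.ne'
  have hθne : θ ≠ 0 := hθ0.ne'
  have hθ1' : (0:ℝ) < 1 - θ := by linarith
  -- convexity of F via per-summand convexity
  have convF : ∀ x z : EuclideanSpace ℝ (Fin d), F z + ⟪gF z, x - z⟫ ≤ F x := by
    intro x z
    have hsum : ∑ i, (fi i z + ⟪gi i z, x - z⟫) ≤ ∑ i, fi i x :=
      Finset.sum_le_sum fun i _ => convex_grad_ineq (hconv i) (hgrad i z) x
    rw [Finset.sum_add_distrib] at hsum
    have hg' : ⟪gF z, x - z⟫ = (n:ℝ)⁻¹ * ∑ i, ⟪gi i z, x - z⟫ := by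
      rw [hgF, real_inner_smul_left, sum_inner]
    rw [hF x, hF z, hg', one_div]
    have h2 := mul_le_mul_of_nonneg_left hsum (by positivity : (0:ℝ) ≤ (n:ℝ)⁻¹)
    rw [mul_add] at h2
    linarith
  -- sums of gradients
  have hsum_y : ∑ i, gi i y = (n:ℝ) • gF y := by
    rw [hgF, smul_smul, mul_inv_cancel₀ hnne, one_smul]
  have hsum_t : ∑ i, gi i xt = (n:ℝ) • gF xt := by
    rw [hgF, smul_smul, mul_inv_cancel₀ hnne, one_smul]
  have hDvS : ∀ v, Dv v * (∑ i, p i v) = n := by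
    intro v
    have h := hDv v
    field_simp at h
    linarith
  have hp_nonneg : ∀ i v, 0 ≤ p i v := by
    intro i v; rcases hp i v with h | h <;> rw [h] <;> norm_num
  have hDvpos : ∀ v, 0 < Dv v := by
    intro v
    have h := hDv v
    have hS0 : (0:ℝ) ≤ ∑ i, p i v := Finset.sum_nonneg fun i _ => hp_nonneg i v
    by_contra hc
    push_neg at hc
    have h1 : (0:ℝ) ≤ (1 / (n:ℝ)) * ∑ i, p i v := by positivity
    nlinarith
  have hDisum : ∑ i, Di i = (n:ℝ) • gF xt := by
    ext v
    rw [euclid_sum_apply]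
    have : ∀ i, Di i v = p i v * (Dv v * gF xt v) := fun i => hDi i v
    rw [Finset.sum_congr rfl fun i _ => this i, ← Finset.sum_mul]
    show _ = (n:ℝ) * gF xt v
    linear_combination (gF xt v) * hDvS v
  have hGsum : ∑ i, (gi i y - gi i xt + Di i) = (n:ℝ) • gF y := by
    rw [Finset.sum_add_distrib, Finset.sum_sub_distrib, hsum_y, hsum_t, hDisum]
    abel
  -- (O1) convexity at xstar
  have h_s : ⟪gF y, xstar - y⟫ ≤ F xstar - F y := by linarith [convF xstar y]
  -- (O3) smoothness bound
  have coco : ∀ i, ‖gi i y - gi i xt‖^2 ≤ 2*L*(fi i xt - fi i y - ⟪gi i y, xt - y⟫) := by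
    intro i
    have h := cocoercivity (hgrad i) (hconv i) hL (hlip i) xt y
    rw [show ‖gi i y - gi i xt‖ = ‖gi i xt - gi i y‖ from norm_sub_rev _ _]
    exact h
  have hsump : ∑ i, ‖gi i y - gi i xt‖^2
      ≤ 2*L*((∑ i, fi i xt) - (∑ i, fi i y) - ∑ i, ⟪gi i y, xt - y⟫) := by
    calc ∑ i, ‖gi i y - gi i xt‖^2
        ≤ ∑ i, 2*L*(fi i xt - fi i y - ⟪gi i y, xt - y⟫) :=
          Finset.sum_le_sum fun i _ => coco i
      _ = _ := by rw [← Finset.mul_sum, Finset.sum_sub_distrib, Finset.sum_sub_distrib]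
  have hv1 : ⟪gF y, xt - y⟫ = (n:ℝ)⁻¹ * ∑ i, ⟪gi i y, xt - y⟫ := by
    rw [hgF, real_inner_smul_left, sum_inner]
  have h_A : (n:ℝ)⁻¹ * ∑ i, ‖gi i y - gi i xt‖^2
      ≤ 2*L*(F xt - F y - ⟪gF y, xt - y⟫) := by
    have h2 := mul_le_mul_of_nonneg_left hsump (by positivity : (0:ℝ) ≤ (n:ℝ)⁻¹)
    rw [hF xt, hF y, hv1, one_div]
    nlinarith [h2]
  -- (O4) nonnegativity of m
  have h_m : (0:ℝ) ≤ ⟪gF xt, Dg⟫ := by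
    rw [euclid_inner_apply]
    apply Finset.sum_nonneg
    intro v _
    rw [hDg v]
    nlinarith [hDvpos v, sq_nonneg (gF xt v)]
  -- (O5) coupling identity
  have hvec : θ • (zk - xstar) = (-θ) • (xstar - y) + (-(1-θ)) • (xt - y) + φ • Dg := by
    rw [hy]; module
  have h_E1 : θ * ⟪gF y, zk - xstar⟫
      = -(θ * ⟪gF y, xstar - y⟫) - (1-θ)*⟪gF y, xt - y⟫ + ((1-θ)/L)*⟪gF y, Dg⟫ := by
    have h := congrArg (fun t => (⟪gF y, t⟫ : ℝ)) hvec
    simp only [inner_add_right, real_inner_smul_right] at h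
    rw [hφ] at h
    linarith
  -- (O6) quadratic expansion
  have hexp : ∀ i, ‖z' i - xstar‖^2
      = ‖zk - xstar‖^2 - 2*(η*⟪zk - xstar, gi i y - gi i xt + Di i⟫)
        + η^2*‖gi i y - gi i xt + Di i‖^2 := by
    intro i
    have hzi : z' i - xstar = (zk - xstar) - η • (gi i y - gi i xt + Di i) := by
      rw [hz' i]; module
    rw [hzi, norm_sub_sq_real, real_inner_smul_right, norm_smul, mul_pow,
      Real.norm_eq_abs, sq_abs]
  have hsums : ∑ i, ⟪zk - xstar, gi i y - gi i xt + Di i⟫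
      = (n:ℝ) * ⟪gF y, zk - xstar⟫ := by
    rw [← inner_sum, hGsum, real_inner_smul_right, real_inner_comm]
  have hsz : ∑ i, ‖z' i - xstar‖^2
      = (n:ℝ)*‖zk - xstar‖^2 - 2*(η*((n:ℝ)*⟪gF y, zk - xstar⟫))
        + η^2*∑ i, ‖gi i y - gi i xt + Di i‖^2 := by
    calc ∑ i, ‖z' i - xstar‖^2
        = ∑ i, (‖zk - xstar‖^2 - 2*(η*⟪zk - xstar, gi i y - gi i xt + Di i⟫)
            + η^2*‖gi i y - gi i xt + Di i‖^2) := Finset.sum_congr rfl fun i _ => hexp i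
      _ = _ := by
          simp only [Finset.sum_add_distrib, Finset.sum_sub_distrib, Finset.sum_const,
            Finset.card_univ, Fintype.card_fin, nsmul_eq_mul, ← Finset.mul_sum]
          rw [hsums]
  have h_Z : ‖zk - xstar‖^2 - (1/n:ℝ)*∑ i, ‖z' i - xstar‖^2
      = 2*((1-θ)/(L*θ))*⟪gF y, zk - xstar⟫
        - ((1-θ)/(L*θ))^2*((n:ℝ)⁻¹*∑ i, ‖gi i y - gi i xt + Di i‖^2) := by
    rw [← hη, hsz]
    field_simp
    ring
  -- (O7) variance decomposition
  have hI2 : ∀ i, (⟪gi i y - gi i xt, Di i⟫:ℝ) = ⟪gi i y - gi i xt, Dg⟫ := by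
    intro i
    rw [euclid_inner_apply, euclid_inner_apply]
    refine Finset.sum_congr rfl fun v _ => ?_
    rw [hDi i v, hDg v]
    rcases hp i v with h0 | h1
    · have hay : gi i y v = 0 := hsupp i y v h0
      have hat : gi i xt v = 0 := hsupp i xt v h0
      have ha : (gi i y - gi i xt) v = 0 := by
        show gi i y v - gi i xt v = 0
        rw [hay, hat, sub_zero]
      rw [ha]; ring
    · rw [h1, one_mul]
  have hI3 : ∑ i, ‖Di i‖^2 = (n:ℝ) * ⟪gF xt, Dg⟫ := by
    have hnorm : ∀ i, ‖Di i‖^2 = ∑ v, Di i v * Di i v := by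
      intro i; rw [← real_inner_self_eq_norm_sq, euclid_inner_apply]
    calc ∑ i, ‖Di i‖^2 = ∑ i, ∑ v, Di i v * Di i v :=
          Finset.sum_congr rfl fun i _ => hnorm i
      _ = ∑ v, ∑ i, Di i v * Di i v := Finset.sum_comm
      _ = ∑ v, (n:ℝ) * (gF xt v * Dg v) := by
          refine Finset.sum_congr rfl fun v _ => ?_
          have hterm : ∀ i, Di i v * Di i v
              = p i v * ((Dv v * gF xt v)*(Dv v * gF xt v)) := by
            intro i
            rw [hDi i v]
            rcases hp i v with h' | h' <;> rw [h'] <;> ring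
          rw [Finset.sum_congr rfl fun i _ => hterm i, ← Finset.sum_mul, hDg v]
          linear_combination (Dv v * gF xt v * gF xt v) * hDvS v
      _ = (n:ℝ) * ∑ v, gF xt v * Dg v := by rw [Finset.mul_sum]
      _ = (n:ℝ) * ⟪gF xt, Dg⟫ := by rw [euclid_inner_apply]
  have hcross : ∑ i, (⟪gi i y - gi i xt, Dg⟫:ℝ)
      = (n:ℝ)*⟪gF y, Dg⟫ - (n:ℝ)*⟪gF xt, Dg⟫ := by
    rw [← sum_inner, Finset.sum_sub_distrib, hsum_y, hsum_t, inner_sub_left,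
      real_inner_smul_left, real_inner_smul_left]
  have hGi : ∀ i, ‖gi i y - gi i xt + Di i‖^2
      = ‖gi i y - gi i xt‖^2 + 2*⟪gi i y - gi i xt, Di i⟫ + ‖Di i‖^2 :=
    fun i => norm_add_sq_real _ _
  have hsumG : ∑ i, ‖gi i y - gi i xt + Di i‖^2
      = (∑ i, ‖gi i y - gi i xt‖^2)
        + 2*((n:ℝ)*⟪gF y, Dg⟫ - (n:ℝ)*⟪gF xt, Dg⟫) + (n:ℝ)*⟪gF xt, Dg⟫ := by
    rw [Finset.sum_congr rfl fun i _ => hGi i, Finset.sum_add_distrib,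
      Finset.sum_add_distrib, hI3, Finset.sum_congr rfl fun i _ =>
        congrArg (fun t => 2*t) (hI2 i), ← Finset.mul_sum, hcross]
  have h_S : (n:ℝ)⁻¹*∑ i, ‖gi i y - gi i xt + Di i‖^2
      = ((n:ℝ)⁻¹*∑ i, ‖gi i y - gi i xt‖^2) + 2*⟪gF y, Dg⟫ - ⟪gF xt, Dg⟫ := by
    rw [hsumG]
    field_simp
    ring
  -- assemble
  exact scalar_final hθ0 hθ1 hL h_s h_A h_m h_E1 h_S h_Z
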